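/- For any positive sequence (ε_k) tending to 0, there exists a sequence (n_k) of positive integers with n_{k+1}/n_k ≥ 1 + ε_k for all k ≥ k_0, and a permutation σ of the positive integers, such that the permuted central limit theorem fails: it is not the case that λ{x ∈ (0,1) : ∑_{k=1}^N cos(2π n_{σ(k)} x) ≤ t √(N/2)} converges to the standard normal distribution function for all t. -/

import Mathlib

open MeasureTheory Filter Set Real Topology

namespace PCLT

/-- Chunk data: `(SP φ j).1` is the start index of chunk `j`, `(SP φ j).2` the base value of
its initial "padding" region. -/
def SP (φ : ℕ → ℕ) : ℕ → ℕ × ℕ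
  | 0 => (0, 1)
  | j+1 =>
    let s := (SP φ j).1
    let P := (SP φ j).2
    let A := 16 * (s + j + 1)^4
    let K := max (s + 1) (φ (2*A))
    (K + A, 2 * ((2*A - 1) * (P * 2^(K - s))))

variable (φ : ℕ → ℕ)

def cs (j : ℕ) : ℕ := (SP φ j).1
def cP (j : ℕ) : ℕ := (SP φ j).2
def cA (j : ℕ) : ℕ := 16 * (cs φ j + j + 1)^4
def cK (j : ℕ) : ℕ := max (cs φ j + 1) (φ (2 * cA φ j))
def cd (j : ℕ) : ℕ := cP φ j * 2^(cK φ j - cs φ j)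

lemma cs_zero : cs φ 0 = 0 := rfl
lemma cP_zero : cP φ 0 = 1 := rfl
lemma cs_succ (j : ℕ) : cs φ (j+1) = cK φ j + cA φ j := rfl
lemma cP_succ (j : ℕ) : cP φ (j+1) = 2 * ((2 * cA φ j - 1) * cd φ j) := rfl

lemma cA_pos (j : ℕ) : 0 < cA φ j := by
  have : 0 < (cs φ j + j + 1)^4 := by positivity
  unfold cA; omega

lemma cP_pos (j : ℕ) : 0 < cP φ j := by
  induction j with
  | zero => exact Nat.one_pos
  | succ j ih =>
    rw [cP_succ]
    have h1 : 0 < cd φ j := Nat.mul_pos ih (Nat.pow_pos (by norm_num))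
    have h2 : 0 < 2 * cA φ j - 1 := by have := cA_pos φ j; omega
    positivity

lemma cd_pos (j : ℕ) : 0 < cd φ j :=
  Nat.mul_pos (cP_pos φ j) (Nat.pow_pos (by norm_num))

lemma cs_lt_cK (j : ℕ) : cs φ j < cK φ j := lt_of_lt_of_le (Nat.lt_succ_self _) (le_max_left _ _)

lemma cs_lt_cs_succ (j : ℕ) : cs φ j < cs φ (j+1) := by
  have := cs_lt_cK φ j
  have := cA_pos φ j
  rw [cs_succ]; omega

lemma cs_strictMono : StrictMono (cs φ) := strictMono_nat_of_lt_succ (cs_lt_cs_succ φ)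

lemma le_cs (j : ℕ) : j ≤ cs φ j := by
  induction j with
  | zero => simp [cs_zero]
  | succ j ih => have := cs_lt_cs_succ φ j; omega

/-- the index of the chunk containing `k` -/
def idx (k : ℕ) : ℕ := Nat.findGreatest (fun j => cs φ j ≤ k) k

lemma cs_idx_le (k : ℕ) : cs φ (idx φ k) ≤ k := by
  refine Nat.findGreatest_spec (P := fun j => cs φ j ≤ k) (Nat.zero_le _) ?_
  simp [cs_zero]

lemma lt_cs_idx_succ (k : ℕ) : k < cs φ (idx φ k + 1) := by
  by_contra h
  push_neg at h
  have h1 : idx φ k + 1 ≤ k := le_trans (le_cs φ _) h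
  have h2 : idx φ k + 1 ≤ idx φ k :=
    Nat.le_findGreatest (P := fun j => cs φ j ≤ k) h1 h
  omega

lemma idx_eq {j k : ℕ} (h1 : cs φ j ≤ k) (h2 : k < cs φ (j+1)) : idx φ k = j := by
  have ha := cs_idx_le φ k
  have hb := lt_cs_idx_succ φ k
  rcases lt_trichotomy (idx φ k) j with h | h | h
  · have : cs φ (idx φ k + 1) ≤ cs φ j := (cs_strictMono φ).le_iff_le.2 h
    omega
  · exact h
  · have : cs φ (j + 1) ≤ cs φ (idx φ k) := (cs_strictMono φ).le_iff_le.2 h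
    omega

/-- The frequency sequence. -/
def nseq (k : ℕ) : ℕ :=
  if k < cK φ (idx φ k) then cP φ (idx φ k) * 2^(k - cs φ (idx φ k))
  else (cA φ (idx φ k) + (k - cK φ (idx φ k))) * cd φ (idx φ k)

lemma nseq_pos (k : ℕ) : 0 < nseq φ k := by
  unfold nseq
  split
  · exact Nat.mul_pos (cP_pos φ _) (Nat.pow_pos (by norm_num))
  · exact Nat.mul_pos (by have := cA_pos φ (idx φ k); omega) (cd_pos φ _)

/-- forward permutation: within each chunk, move the block to the front -/
def pf (k : ℕ) : ℕ :=
  if k < cs φ (idx φ k) + cA φ (idx φ k) then (k - cs φ (idx φ k)) + cK φ (idx φ k)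
  else k - cA φ (idx φ k)

/-- inverse permutation -/
def pg (k : ℕ) : ℕ :=
  if k < cK φ (idx φ k) then k + cA φ (idx φ k)
  else (k - cK φ (idx φ k)) + cs φ (idx φ k)

lemma pf_eq_of_block {j p : ℕ} (h1 : cs φ j ≤ p) (h2 : p < cs φ j + cA φ j) :
    pf φ p = (p - cs φ j) + cK φ j := by
  have h3 := cs_lt_cK φ j
  have h4 := cs_succ φ j
  have hidx : idx φ p = j := idx_eq φ h1 (by omega)
  unfold pf
  rw [hidx]
  split
  · rfl
  · omega

lemma pf_eq_of_pad {j p : ℕ} (h1 : cs φ j + cA φ j ≤ p) (h2 : p < cs φ (j+1)) :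
    pf φ p = p - cA φ j := by
  have h3 := cs_lt_cK φ j
  have h4 := cs_succ φ j
  have hidx : idx φ p = j := idx_eq φ (by omega) h2
  unfold pf
  rw [hidx]
  split
  · omega
  · rfl

lemma pg_eq_of_pad {j p : ℕ} (h1 : cs φ j ≤ p) (h2 : p < cK φ j) :
    pg φ p = p + cA φ j := by
  have h3 := cs_lt_cK φ j
  have h4 := cs_succ φ j
  have hidx : idx φ p = j := idx_eq φ h1 (by omega)
  unfold pg
  rw [hidx]
  split
  · rfl
  · omega

lemma pg_eq_of_block {j p : ℕ} (h1 : cK φ j ≤ p) (h2 : p < cs φ (j+1)) :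
    pg φ p = (p - cK φ j) + cs φ j := by
  have h3 := cs_lt_cK φ j
  have h4 := cs_succ φ j
  have hidx : idx φ p = j := idx_eq φ (by omega) h2
  unfold pg
  rw [hidx]
  split
  · omega
  · rfl

lemma pf_pg (k : ℕ) : pf φ (pg φ k) = k := by
  have h1 := cs_idx_le φ k
  have h2 := lt_cs_idx_succ φ k
  have h3 := cs_lt_cK φ (idx φ k)
  have h4 := cs_succ φ (idx φ k)
  by_cases h : k < cK φ (idx φ k)
  · rw [pg_eq_of_pad φ h1 h, pf_eq_of_pad φ (j := idx φ k) (by omega) (by omega)]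
    omega
  · rw [pg_eq_of_block φ (j := idx φ k) (by omega) h2,
      pf_eq_of_block φ (j := idx φ k) (by omega) (by omega)]
    omega

lemma pg_pf (k : ℕ) : pg φ (pf φ k) = k := by
  have h1 := cs_idx_le φ k
  have h2 := lt_cs_idx_succ φ k
  have h3 := cs_lt_cK φ (idx φ k)
  have h4 := cs_succ φ (idx φ k)
  by_cases h : k < cs φ (idx φ k) + cA φ (idx φ k)
  · rw [pf_eq_of_block φ h1 h, pg_eq_of_block φ (j := idx φ k) (by omega) (by omega)]
    omega
  · rw [pf_eq_of_pad φ (j := idx φ k) (by omega) h2,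
      pg_eq_of_pad φ (j := idx φ k) (by omega) (by omega)]
    omega

def perm : Equiv.Perm ℕ :=
  { toFun := pf φ, invFun := pg φ, left_inv := pg_pf φ, right_inv := pf_pg φ }

lemma nseq_pad {j k : ℕ} (h1 : cs φ j ≤ k) (h2 : k < cK φ j) :
    nseq φ k = cP φ j * 2^(k - cs φ j) := by
  have h3 := cs_succ φ j
  have h4 := cA_pos φ j
  have hidx : idx φ k = j := idx_eq φ h1 (by omega)
  unfold nseq
  rw [hidx]
  split
  · rfl
  · omega

lemma nseq_block {j k : ℕ} (h1 : cK φ j ≤ k) (h2 : k < cs φ (j+1)) :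
    nseq φ k = (cA φ j + (k - cK φ j)) * cd φ j := by
  have h3 := cs_lt_cK φ j
  have hidx : idx φ k = j := idx_eq φ (by omega) h2
  unfold nseq
  rw [hidx]
  split
  · omega
  · rfl

lemma nseq_double {k : ℕ} (h : 2 * nseq φ k ≤ nseq φ (k+1)) {e : ℝ} (he0 : 0 ≤ e)
    (he1 : e ≤ 1) : (1 + e) * (nseq φ k : ℝ) ≤ (nseq φ (k+1) : ℝ) := by
  have h2 : (2 : ℝ) * (nseq φ k : ℝ) ≤ (nseq φ (k+1) : ℝ) := by exact_mod_cast h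
  nlinarith [Nat.cast_nonneg (α := ℝ) (nseq φ k)]

lemma gap_cond (ε : ℕ → ℝ) (hφ : ∀ m k, φ m ≤ k → ε k < 1/(m+1)) (hε : ∀ k, 0 ≤ ε k)
    (k : ℕ) (hk : φ 1 ≤ k) : (1 + ε k) * (nseq φ k : ℝ) ≤ (nseq φ (k+1) : ℝ) := by
  have hε1 : ε k ≤ 1 := by
    have := hφ 1 k hk
    norm_num at this
    linarith
  have h1 := cs_idx_le φ k
  have h2 := lt_cs_idx_succ φ k
  have h3 := cs_lt_cK φ (idx φ k)
  have h4 := cs_succ φ (idx φ k)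
  have hA := cA_pos φ (idx φ k)
  have hd := cd_pos φ (idx φ k)
  have hP := cP_pos φ (idx φ k)
  by_cases hc1 : k + 1 < cK φ (idx φ k)
  · -- pad, next also pad
    refine nseq_double φ ?_ (hε k) hε1
    rw [nseq_pad φ h1 (by omega), nseq_pad φ (j := idx φ k) (by omega) hc1]
    have : k + 1 - cs φ (idx φ k) = (k - cs φ (idx φ k)) + 1 := by omega
    rw [this, pow_succ]
    ring_nf
    omega
  · by_cases hc2 : k + 1 = cK φ (idx φ k)
    · -- last pad step
      refine nseq_double φ ?_ (hε k) hε1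
      rw [nseq_pad φ h1 (by omega), nseq_block φ (j := idx φ k) (by omega) (by omega)]
      have he1 : k + 1 - cK φ (idx φ k) = 0 := by omega
      have he2 : cK φ (idx φ k) - cs φ (idx φ k) = (k - cs φ (idx φ k)) + 1 := by omega
      rw [he1]
      unfold cd
      rw [he2, pow_succ]
      have heq : (cA φ (idx φ k) + 0) * (cP φ (idx φ k) * (2 ^ (k - cs φ (idx φ k)) * 2))
          = cA φ (idx φ k) * (2 * (cP φ (idx φ k) * 2 ^ (k - cs φ (idx φ k)))) := by ring
      rw [heq]
      exact Nat.le_mul_of_pos_left _ hA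
    · by_cases hc3 : k + 1 < cs φ (idx φ k + 1)
      · -- block step
        have hkK : cK φ (idx φ k) ≤ k := by omega
        rw [nseq_block φ hkK (by omega), nseq_block φ (j := idx φ k) (by omega) hc3]
        set j := idx φ k with hj
        set A := cA φ j with hA'
        set i := k - cK φ j with hi
        have hi1 : k + 1 - cK φ j = i + 1 := by omega
        rw [hi1]
        have hiA : i + 1 < A := by omega
        -- ε k < 1/(2A+1)
        have hεk : ε k < 1/(2*A+1) := by
          have := hφ (2*A) k (le_trans (le_max_right _ _) hkK)
          have h2A : ((2*A : ℕ) : ℝ) + 1 = 2*(A:ℝ)+1 := by push_cast; ring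
          rw [h2A] at this
          exact this
        have hd0 : (0:ℝ) < (cd φ j : ℝ) := by exact_mod_cast hd
        have hcast : ((A + i) * cd φ j : ℕ) = ((A:ℝ) + i) * (cd φ j : ℝ) := by push_cast; ring
        have hcast2 : ((A + (i+1)) * cd φ j : ℕ) = (((A:ℝ) + i) * (cd φ j : ℝ)) + (cd φ j : ℝ) := by
          push_cast; ring
        rw [hcast, hcast2]
        have hbound : ε k * (((A:ℝ) + i) * (cd φ j : ℝ)) ≤ (cd φ j : ℝ) := by
          have hAi : (A:ℝ) + i ≤ 2*(A:ℝ) + 1 := by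
            have : i ≤ A := by omega
            have : (i:ℝ) ≤ (A:ℝ) := by exact_mod_cast this
            linarith
          have hApos : (0:ℝ) < 2*(A:ℝ)+1 := by positivity
          have h5 : ε k * ((A:ℝ) + i) ≤ 1 := by
            calc ε k * ((A:ℝ) + i) ≤ (1/(2*(A:ℝ)+1)) * (2*(A:ℝ)+1) := by
                  apply mul_le_mul (le_of_lt hεk) hAi (by positivity) (by positivity)
              _ = 1 := by field_simp
          calc ε k * (((A:ℝ) + i) * (cd φ j : ℝ)) = (ε k * ((A:ℝ) + i)) * (cd φ j : ℝ) := by ring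
            _ ≤ 1 * (cd φ j : ℝ) := by apply mul_le_mul_of_nonneg_right h5 (le_of_lt hd0)
            _ = (cd φ j : ℝ) := by ring
        nlinarith [Nat.cast_nonneg (α := ℝ) ((A + i) * cd φ j), hε k]
      · -- chunk boundary
        have hke : k + 1 = cs φ (idx φ k + 1) := by omega
        refine nseq_double φ ?_ (hε k) hε1
        rw [nseq_block φ (j := idx φ k) (by omega) (by omega),
          nseq_pad φ (j := idx φ k + 1) (by omega) (by
            have := cs_lt_cK φ (idx φ k + 1); omega)]
        have : k + 1 - cs φ (idx φ k + 1) = 0 := by omega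
        rw [this, pow_zero, cP_succ]
        have : k - cK φ (idx φ k) = cA φ (idx φ k) - 1 := by omega
        rw [this]
        have : cA φ (idx φ k) + (cA φ (idx φ k) - 1) = 2 * cA φ (idx φ k) - 1 := by omega
        rw [this]
        ring_nf
        omega

lemma abs_exp_mul_I_sub_one (θ : ℝ) :
    ‖Complex.exp (θ * Complex.I) - 1‖ = 2 * |Real.sin (θ/2)| := by
  have h : Complex.exp (θ * Complex.I) - 1
      = Complex.ofReal (Real.cos θ - 1) + Complex.ofReal (Real.sin θ) * Complex.I := by
    rw [Complex.exp_mul_I, ← Complex.ofReal_cos, ← Complex.ofReal_sin]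
    push_cast
    ring
  rw [h, Complex.norm_def, Complex.normSq_add_mul_I]
  have h2 : (Real.cos θ - 1)^2 + (Real.sin θ)^2 = (2 * Real.sin (θ/2))^2 := by
    have h1 : Real.sin (θ/2)^2 = 1/2 - Real.cos (2*(θ/2))/2 := Real.sin_sq_eq_half_sub (θ/2)
    have h4 : 2*(θ/2) = θ := by ring
    rw [h4] at h1
    have h3 : Real.sin θ ^2 + Real.cos θ^2 = 1 := Real.sin_sq_add_cos_sq θ
    nlinarith
  rw [h2, Real.sqrt_sq_eq_abs, abs_mul]
  norm_num

lemma cos_sum_bound (M L D : ℕ) (x : ℝ) (h : Real.sin (π * D * x) ≠ 0) :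
    |∑ i ∈ Finset.range L, Real.cos (2 * π * (((M + i) * D : ℕ) : ℝ) * x)|
      ≤ 1 / |Real.sin (π * D * x)| := by
  set θ : ℝ := 2 * π * D * x with hθ
  have hθ2 : θ/2 = π * D * x := by rw [hθ]; ring
  set z : ℂ := Complex.exp (θ * Complex.I) with hz
  have habs : ‖z - 1‖ = 2 * |Real.sin (π * D * x)| := by
    rw [hz, abs_exp_mul_I_sub_one, hθ2]
  have hz1 : z ≠ 1 := by
    intro hzz
    rw [hzz] at habs
    simp at habs
    exact h habs
  have hterm : ∀ i : ℕ, Real.cos (2 * π * (((M + i) * D : ℕ) : ℝ) * x)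
      = (Complex.exp (((M : ℝ) * θ) * Complex.I) * z ^ i).re := by
    intro i
    have e1 : Complex.exp (((M : ℝ) * θ) * Complex.I) * z ^ i
        = Complex.exp ((((M : ℝ) + i) * θ) * Complex.I) := by
      rw [hz, ← Complex.exp_nat_mul, ← Complex.exp_add]
      congr 1
      push_cast
      ring
    rw [e1]
    have e2 : ((((M : ℝ) + i) * θ : ℝ) : ℂ) * Complex.I
        = (((M : ℝ) + i) * θ) * Complex.I := by push_cast; ring
    rw [← e2, Complex.exp_ofReal_mul_I_re]
    congr 1
    push_cast
    ring
  calc |∑ i ∈ Finset.range L, Real.cos (2 * π * (((M + i) * D : ℕ) : ℝ) * x)|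
      = |(∑ i ∈ Finset.range L, Complex.exp (((M : ℝ) * θ) * Complex.I) * z ^ i).re| := by
        rw [Complex.re_sum]
        congr 1
        exact Finset.sum_congr rfl fun i _ => hterm i
    _ ≤ ‖∑ i ∈ Finset.range L, Complex.exp (((M : ℝ) * θ) * Complex.I) * z ^ i‖ :=
        Complex.abs_re_le_norm _
    _ = ‖Complex.exp (((M : ℝ) * θ) * Complex.I)‖ *
          ‖∑ i ∈ Finset.range L, z ^ i‖ := by
        rw [← Finset.mul_sum, norm_mul]
    _ = ‖(z ^ L - 1) / (z - 1)‖ := by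
        rw [geom_sum_eq hz1]
        have e3 : (((M : ℝ) * θ : ℝ) : ℂ) * Complex.I = ((M : ℝ) * θ) * Complex.I := by
          push_cast; ring
        rw [← e3, Complex.norm_exp_ofReal_mul_I, one_mul]
    _ ≤ 2 / ‖z - 1‖ := by
        rw [norm_div]
        have hpos : 0 < ‖z - 1‖ := by
          rw [habs]
          have : |Real.sin (π * D * x)| > 0 := abs_pos.2 h
          positivity
        have hnum : ‖z ^ L - 1‖ ≤ 2 := by
          calc ‖z ^ L - 1‖ ≤ ‖z ^ L‖ + ‖(1:ℂ)‖ := by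
                simpa using norm_sub_le (z ^ L) 1
            _ = 2 := by
              rw [norm_pow, hz, Complex.norm_exp_ofReal_mul_I]
              norm_num
        gcongr
    _ = 1 / |Real.sin (π * D * x)| := by
        rw [habs]
        have hs : |Real.sin (π * D * x)| ≠ 0 := abs_ne_zero.2 h
        field_simp

lemma bad_measure (D : ℕ) (hD : 1 ≤ D) {δ : ℝ} (hδ0 : 0 < δ) :
    volume {x ∈ Ioo (0:ℝ) 1 | |Real.sin (π * D * x)| < δ} ≤ ENNReal.ofReal (2 * δ) := by
  have hDR : (0:ℝ) < D := by exact_mod_cast hD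
  have hsub : {x ∈ Ioo (0:ℝ) 1 | |Real.sin (π * D * x)| < δ}
      ⊆ ⋃ m ∈ Finset.range (D+1), Metric.ball ((m : ℝ)/D) (δ/(2*D)) := by
    intro x hx
    obtain ⟨⟨hx0, hx1⟩, hsin⟩ := hx
    set y : ℝ := D * x with hy
    set m : ℤ := round y with hm
    have habs : |y - (m:ℝ)| ≤ 1/2 := abs_sub_round y
    have hsin2 : |Real.sin (π * y)| = |Real.sin (π * (y - m))| := by
      have : π * y = π * (y - m) + (m : ℝ) * π := by ring
      rw [this, Real.sin_add_int_mul_pi, abs_mul]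
      have : |((-1 : ℝ)) ^ m| = 1 := by
        rcases Int.even_or_odd m with he | ho
        · rw [he.neg_one_zpow]
          norm_num
        · rw [ho.neg_one_zpow]
          norm_num
      rw [this, one_mul]
    have hlow : 2 * |y - (m:ℝ)| ≤ |Real.sin (π * (y - m))| := by
      have h1 : |π * (y - m)| ≤ π / 2 := by
        rw [abs_mul, abs_of_pos Real.pi_pos]
        nlinarith [Real.pi_pos]
      have := Real.mul_abs_le_abs_sin h1
      rw [abs_mul, abs_of_pos Real.pi_pos] at this
      have hπ : (0:ℝ) < π := Real.pi_pos
      have heq : 2/π * (π * |y - (m:ℝ)|) = 2 * |y - (m:ℝ)| := by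
        field_simp
      linarith
    have hym : |y - (m:ℝ)| < δ/2 := by
      have hyx : π * D * x = π * y := by rw [hy]; ring
      rw [hyx, hsin2] at hsin
      linarith
    have hm0 : 0 ≤ m := by
      obtain ⟨hc1, hc2⟩ := abs_sub_le_iff.1 habs
      have hy0 : 0 < y := by positivity
      have : (-1 : ℝ) < (m:ℝ) := by linarith
      have : (-1 : ℤ) < m := by exact_mod_cast this
      omega
    have hmD : m ≤ D := by
      have hc := abs_sub_le_iff.1 habs
      have hyD : y < D := by
        rw [hy]
        nlinarith
      have : (m:ℝ) < (D:ℝ) + 1 := by linarith [hc.2]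
      exact_mod_cast Int.lt_add_one_iff.1 (by exact_mod_cast this)
    have hmem : m.toNat ∈ Finset.range (D+1) := Finset.mem_range.2 (by omega)
    refine Set.mem_biUnion hmem ?_
    rw [Metric.mem_ball, Real.dist_eq]
    have hmt : ((m.toNat : ℕ) : ℝ) = (m : ℝ) := by
      exact_mod_cast congrArg (fun z : ℤ => (z : ℝ)) (Int.toNat_of_nonneg hm0)
    rw [hmt]
    have hxe : x - (m:ℝ)/D = (y - m)/D := by
      rw [hy]
      field_simp
    rw [hxe, abs_div, abs_of_pos hDR, div_lt_div_iff₀ hDR (by positivity)]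
    calc |y - (m:ℝ)| * (2*(D:ℝ)) < δ/2 * (2*(D:ℝ)) := by
          apply mul_lt_mul_of_pos_right hym (by positivity)
      _ = δ * (D:ℝ) := by ring

  calc volume {x ∈ Ioo (0:ℝ) 1 | |Real.sin (π * D * x)| < δ}
      ≤ volume (⋃ m ∈ Finset.range (D+1), Metric.ball ((m : ℝ)/D) (δ/(2*D))) :=
        measure_mono hsub
    _ ≤ ∑ m ∈ Finset.range (D+1), volume (Metric.ball ((m : ℝ)/D) (δ/(2*D))) :=
        measure_biUnion_finset_le _ _
    _ = ∑ m ∈ Finset.range (D+1), ENNReal.ofReal (2 * (δ/(2*D))) := by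
        refine Finset.sum_congr rfl fun m _ => ?_
        rw [Real.volume_ball]
    _ = (D+1) * ENNReal.ofReal (2 * (δ/(2*D))) := by
        rw [Finset.sum_const, Finset.card_range, nsmul_eq_mul]
        norm_cast
    _ ≤ ENNReal.ofReal (2 * δ) := by
        have he : ((D:ENNReal)+1) = ENNReal.ofReal ((D:ℝ)+1) := by
          rw [ENNReal.ofReal_add (by positivity) zero_le_one]
          simp
        rw [he, ← ENNReal.ofReal_mul (by positivity)]
        apply ENNReal.ofReal_le_ofReal
        have h1 : ((D:ℝ)+1) * (2 * (δ/(2*(D:ℝ)))) = ((D:ℝ)+1) * δ / D := by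
          field_simp
        rw [h1]
        rw [div_le_iff₀ hDR]
        have : (1:ℝ) ≤ D := by exact_mod_cast hD
        nlinarith

lemma gauss_lt_one : (Real.sqrt (2*π))⁻¹ * ∫ u in Iic (1:ℝ), Real.exp (-u^2/2) < 1 := by
  have hfe : (fun u : ℝ => Real.exp (-u^2/2)) = fun u : ℝ => Real.exp (-(1/2)*u^2) := by
    funext u
    ring_nf
  have hInt : Integrable (fun u : ℝ => Real.exp (-u^2/2)) := by
    rw [hfe]
    exact integrable_exp_neg_mul_sq (by norm_num)
  have htot : (∫ u : ℝ, Real.exp (-u^2/2)) = Real.sqrt (2*π) := by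
    rw [hfe]
    rw [integral_gaussian (1/2 : ℝ)]
    norm_num [mul_comm]
  have hsplit : (∫ u in Iic (1:ℝ), Real.exp (-u^2/2))
      + (∫ u in Ioi (1:ℝ), Real.exp (-u^2/2)) = ∫ u : ℝ, Real.exp (-u^2/2) :=
    intervalIntegral.integral_Iic_add_Ioi hInt.integrableOn hInt.integrableOn
  have hpos : 0 < ∫ u in Ioi (1:ℝ), Real.exp (-u^2/2) := by
    rw [setIntegral_pos_iff_support_of_nonneg_ae]
    · have : Function.support (fun u : ℝ => Real.exp (-u^2/2)) = Set.univ := by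
        ext u
        simp [Function.mem_support, Real.exp_ne_zero]
      rw [this, Set.univ_inter]
      simp [Real.volume_Ioi]
    · filter_upwards with u
      positivity
    · exact hInt.integrableOn
  have hsqrt : 0 < Real.sqrt (2*π) := Real.sqrt_pos.2 (by positivity)
  have hlt : (∫ u in Iic (1:ℝ), Real.exp (-u^2/2)) < Real.sqrt (2*π) := by
    rw [← htot, ← hsplit]
    linarith
  calc (Real.sqrt (2*π))⁻¹ * ∫ u in Iic (1:ℝ), Real.exp (-u^2/2)
      < (Real.sqrt (2*π))⁻¹ * Real.sqrt (2*π) := by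
        apply mul_lt_mul_of_pos_left hlt (by positivity)
    _ = 1 := inv_mul_cancel₀ hsqrt.ne'

lemma sum_split (f : ℕ → ℝ) (a b : ℕ) :
    ∑ p ∈ Finset.range (a+b), f p
      = (∑ p ∈ Finset.range a, f p) + ∑ i ∈ Finset.range b, f (a+i) := by
  rw [Finset.range_add, Finset.sum_union (by
    simp only [Finset.disjoint_left, Finset.mem_range, Finset.mem_map, addLeftEmbedding_apply]
    rintro p hp ⟨i, hi, rfl⟩
    omega), Finset.sum_map]
  rfl

lemma nseq_perm_block {j i : ℕ} (hi : i < cA φ j) :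
    nseq φ ((perm φ) (cs φ j + i)) = (cA φ j + i) * cd φ j := by
  have h4 := cs_succ φ j
  have h3 := cs_lt_cK φ j
  have hpf : (perm φ) (cs φ j + i) = (cs φ j + i - cs φ j) + cK φ j :=
    pf_eq_of_block φ (j := j) (by omega) (by omega)
  have hpf2 : (perm φ) (cs φ j + i) = cK φ j + i := by rw [hpf]; omega
  rw [hpf2, nseq_block φ (j := j) (by omega) (by omega)]
  congr 2
  omega

lemma checkpoint (j : ℕ) :
    1 - 2/((cs φ j + j + 1 : ℕ) : ℝ)
      ≤ (volume {x ∈ Ioo (0:ℝ) 1 |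
          ∑ k ∈ Finset.range (cs φ j + cA φ j),
            Real.cos (2 * π * ((nseq φ ((perm φ) k) : ℕ) : ℝ) * x)
              ≤ 1 * Real.sqrt (((cs φ j + cA φ j : ℕ) : ℝ) / 2)}).toReal := by
  set B : ℕ := cs φ j + j + 1 with hB
  have hB1 : 1 ≤ B := by omega
  have hBR : (1:ℝ) ≤ (B:ℝ) := by exact_mod_cast hB1
  set δ : ℝ := 1/(B:ℝ) with hδ
  have hδ0 : 0 < δ := by positivity
  have hd1 : 1 ≤ cd φ j := cd_pos φ j
  have hcA : cA φ j = 16 * B^4 := rfl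
  -- pointwise statement on the good set
  have hpoint : ∀ x, x ∈ Ioo (0:ℝ) 1 → δ ≤ |Real.sin (π * (cd φ j) * x)| →
      ∑ k ∈ Finset.range (cs φ j + cA φ j),
        Real.cos (2 * π * ((nseq φ ((perm φ) k) : ℕ) : ℝ) * x)
          ≤ 1 * Real.sqrt (((cs φ j + cA φ j : ℕ) : ℝ) / 2) := by
    intro x hx hs
    have hsne : Real.sin (π * (cd φ j) * x) ≠ 0 := by
      intro h0
      rw [h0] at hs
      simp only [abs_zero] at hs
      linarith
    rw [sum_split]
    have hfirst : (∑ p ∈ Finset.range (cs φ j),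
        Real.cos (2 * π * ((nseq φ ((perm φ) p) : ℕ) : ℝ) * x)) ≤ (cs φ j : ℝ) := by
      calc (∑ p ∈ Finset.range (cs φ j),
            Real.cos (2 * π * ((nseq φ ((perm φ) p) : ℕ) : ℝ) * x))
          ≤ ∑ p ∈ Finset.range (cs φ j), 1 :=
            Finset.sum_le_sum (fun p _ => Real.cos_le_one _)
        _ = (cs φ j : ℝ) := by simp
    have hsecond : (∑ i ∈ Finset.range (cA φ j),
        Real.cos (2 * π * ((nseq φ ((perm φ) (cs φ j + i)) : ℕ) : ℝ) * x)) ≤ (B:ℝ) := by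
      have hre : (∑ i ∈ Finset.range (cA φ j),
          Real.cos (2 * π * ((nseq φ ((perm φ) (cs φ j + i)) : ℕ) : ℝ) * x))
          = ∑ i ∈ Finset.range (cA φ j),
            Real.cos (2 * π * ((((cA φ j + i) * cd φ j : ℕ)) : ℝ) * x) := by
        refine Finset.sum_congr rfl fun i hi => ?_
        rw [nseq_perm_block φ (Finset.mem_range.1 hi)]
      rw [hre]
      have hbd := cos_sum_bound (cA φ j) (cA φ j) (cd φ j) x hsne
      have habs : |Real.sin (π * (cd φ j) * x)| > 0 := abs_pos.2 hsne
      calc (∑ i ∈ Finset.range (cA φ j),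
            Real.cos (2 * π * ((((cA φ j + i) * cd φ j : ℕ)) : ℝ) * x))
          ≤ |∑ i ∈ Finset.range (cA φ j),
            Real.cos (2 * π * ((((cA φ j + i) * cd φ j : ℕ)) : ℝ) * x)| := le_abs_self _
        _ ≤ 1 / |Real.sin (π * (cd φ j) * x)| := hbd
        _ ≤ 1 / δ := by
            apply one_div_le_one_div_of_le hδ0 hs
        _ = (B:ℝ) := by
            rw [hδ]
            field_simp
    have hthresh : (cs φ j : ℝ) + (B:ℝ)
        ≤ Real.sqrt (((cs φ j + cA φ j : ℕ) : ℝ) / 2) := by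
      have hsB : (cs φ j : ℝ) + 1 ≤ (B:ℝ) := by
        have : cs φ j + 1 ≤ B := by omega
        exact_mod_cast this
      have hcast : ((cs φ j + cA φ j : ℕ) : ℝ) = (cs φ j : ℝ) + 16 * (B:ℝ)^4 := by
        rw [hcA]
        push_cast
        ring
      rw [hcast]
      rw [show ((cs φ j : ℝ) + (B:ℝ)) = Real.sqrt (((cs φ j : ℝ) + (B:ℝ))^2) from
        (Real.sqrt_sq (by positivity)).symm]
      apply Real.sqrt_le_sqrt
      have hs0 : (0:ℝ) ≤ (cs φ j : ℝ) := Nat.cast_nonneg _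
      have hsle : (cs φ j : ℝ) ≤ (B:ℝ) := by linarith
      have hB0 : (0:ℝ) ≤ (B:ℝ) := by linarith
      have h1 : (cs φ j : ℝ)^2 ≤ (B:ℝ)^2 := by nlinarith [mul_le_mul hsle hsle hs0 hB0]
      have hB2 : (1:ℝ) ≤ (B:ℝ)^2 := by nlinarith
      have h2 : (B:ℝ)^2 ≤ (B:ℝ)^4 := by
        nlinarith [mul_le_mul_of_nonneg_left hB2 (sq_nonneg ((B:ℝ)))]
      have h3 : (cs φ j : ℝ) * (B:ℝ) ≤ (B:ℝ)^2 := by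
        nlinarith [mul_le_mul_of_nonneg_right hsle hB0]
      nlinarith
    calc (∑ p ∈ Finset.range (cs φ j),
          Real.cos (2 * π * ((nseq φ ((perm φ) p) : ℕ) : ℝ) * x))
        + ∑ i ∈ Finset.range (cA φ j),
          Real.cos (2 * π * ((nseq φ ((perm φ) (cs φ j + i)) : ℕ) : ℝ) * x)
        ≤ (cs φ j : ℝ) + (B:ℝ) := add_le_add hfirst hsecond
      _ ≤ Real.sqrt (((cs φ j + cA φ j : ℕ) : ℝ) / 2) := hthresh
      _ = 1 * Real.sqrt (((cs φ j + cA φ j : ℕ) : ℝ) / 2) := (one_mul _).symm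
  -- measure estimate
  set Target : Set ℝ := {x ∈ Ioo (0:ℝ) 1 |
      ∑ k ∈ Finset.range (cs φ j + cA φ j),
        Real.cos (2 * π * ((nseq φ ((perm φ) k) : ℕ) : ℝ) * x)
          ≤ 1 * Real.sqrt (((cs φ j + cA φ j : ℕ) : ℝ) / 2)} with hTarget
  set Bad : Set ℝ := {x ∈ Ioo (0:ℝ) 1 | |Real.sin (π * (cd φ j) * x)| < δ} with hBad
  have hBadVol : volume Bad ≤ ENNReal.ofReal (2 * δ) := bad_measure (cd φ j) hd1 hδ0
  have hcover : Ioo (0:ℝ) 1 ⊆ Target ∪ Bad := by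
    intro x hx
    by_cases hbad : |Real.sin (π * (cd φ j) * x)| < δ
    · exact Or.inr ⟨hx, hbad⟩
    · exact Or.inl ⟨hx, hpoint x hx (not_lt.1 hbad)⟩
  have hone : volume (Ioo (0:ℝ) 1) = 1 := by
    rw [Real.volume_Ioo]
    norm_num
  have hvol1 : (1:ENNReal) ≤ volume Target + volume Bad := by
    rw [← hone]
    exact le_trans (measure_mono hcover) (measure_union_le _ _)
  have hTle : volume Target ≤ 1 := by
    rw [← hone]
    exact measure_mono (sep_subset _ _)
  have hTne : volume Target ≠ ⊤ := by
    intro h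
    rw [h] at hTle
    simp at hTle
  -- conclude
  rcases le_or_gt (1 - 2/(B:ℝ)) 0 with hneg | hpos2
  · calc 1 - 2/((B:ℕ):ℝ) ≤ 0 := hneg
      _ ≤ (volume Target).toReal := ENNReal.toReal_nonneg
  · have h2δ : 2*δ = 2/(B:ℝ) := by rw [hδ]; ring
    have hofr : ENNReal.ofReal (1 - 2*δ) ≤ volume Target := by
      have h5 : ENNReal.ofReal (1-2*δ) + ENNReal.ofReal (2*δ) = 1 := by
        rw [← ENNReal.ofReal_add (by linarith) (by positivity)]
        norm_num
      have h6 : ENNReal.ofReal (1-2*δ) = 1 - ENNReal.ofReal (2*δ) :=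
        ENNReal.eq_sub_of_add_eq ENNReal.ofReal_ne_top h5
      rw [h6]
      exact tsub_le_iff_right.2 (le_trans hvol1 (add_le_add_right hBadVol _))
    have hfin := ENNReal.toReal_mono hTne hofr
    rw [ENNReal.toReal_ofReal (by linarith)] at hfin
    calc 1 - 2/((B:ℕ):ℝ) = 1 - 2*δ := by rw [h2δ]
      _ ≤ (volume Target).toReal := hfin

lemma vol_toReal_le_one {α : Prop} (p : ℝ → Prop) :
    (volume {x ∈ Ioo (0:ℝ) 1 | p x}).toReal ≤ 1 := by
  have h1 : volume {x ∈ Ioo (0:ℝ) 1 | p x} ≤ 1 := by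
    have := measure_mono (μ := volume) (sep_subset (Ioo (0:ℝ) 1) p)
    rwa [Real.volume_Ioo, show (1:ℝ) - 0 = 1 by norm_num, ENNReal.ofReal_one] at this
  calc (volume {x ∈ Ioo (0:ℝ) 1 | p x}).toReal ≤ (1 : ENNReal).toReal :=
        ENNReal.toReal_mono ENNReal.one_ne_top h1
    _ = 1 := by simp

end PCLT

/-- Below the Hadamard gap condition, the permutation-invariant CLT can fail:
for any positive sequence `ε_k → 0` there exist a sequence `(n_k)` of positive
integers with `n_{k+1}/n_k ≥ 1 + ε_k` for `k ≥ k₀` and a permutation `σ` such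
that the permuted central limit theorem fails. -/
theorem permuted_clt_fails_below_hadamard
    (ε : ℕ → ℝ) (hε : ∀ k, 0 < ε k) (hε0 : Tendsto ε atTop (𝓝 0)) :
    ∃ (n : ℕ → ℕ) (k₀ : ℕ) (σ : Equiv.Perm ℕ),
      (∀ k, 0 < n k) ∧
      (∀ k ≥ k₀, (1 + ε k) * (n k : ℝ) ≤ (n (k + 1) : ℝ)) ∧
      ¬ (∀ t : ℝ,
          Tendsto
            (fun N : ℕ =>
              (volume {x ∈ Ioo (0 : ℝ) 1 |
                ∑ k ∈ Finset.range N, Real.cos (2 * π * (n (σ k) : ℝ) * x)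
                  ≤ t * Real.sqrt ((N : ℝ) / 2)}).toReal)
            atTop
            (𝓝 ((Real.sqrt (2 * π))⁻¹ * ∫ u in Iic t, Real.exp (-u ^ 2 / 2)))) := by
  classical
  have hex : ∀ m : ℕ, ∃ N : ℕ, ∀ k, N ≤ k → ε k < 1/((m:ℝ)+1) := by
    intro m
    have hlt : (0:ℝ) < 1/((m:ℝ)+1) := by positivity
    have h := hε0.eventually_lt_const hlt
    rcases eventually_atTop.1 h with ⟨N, hN⟩
    exact ⟨N, hN⟩
  choose φ hφ using hex
  refine ⟨PCLT.nseq φ, φ 1, PCLT.perm φ, PCLT.nseq_pos φ, ?_, ?_⟩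
  · intro k hk
    exact PCLT.gap_cond φ ε (fun m k hk => hφ m k hk) (fun k => (hε k).le) k hk
  · intro H
    have H1 := H 1
    set F : ℕ → ℝ := fun N : ℕ =>
      (volume {x ∈ Ioo (0 : ℝ) 1 |
        ∑ k ∈ Finset.range N, Real.cos (2 * π * ((PCLT.nseq φ ((PCLT.perm φ) k) : ℕ) : ℝ) * x)
          ≤ 1 * Real.sqrt ((N : ℝ) / 2)}).toReal with hF
    set c : ℕ → ℕ := fun j => PCLT.cs φ j + PCLT.cA φ j with hc
    have hmono : StrictMono c := strictMono_nat_of_lt_succ (fun j => by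
      have h1 := PCLT.cs_succ φ j
      have h2 := PCLT.cs_lt_cK φ j
      have h3 := PCLT.cA_pos φ (j+1)
      have h4 := PCLT.cA_pos φ j
      simp only [hc]
      omega)
    have hFc : Tendsto (F ∘ c) atTop
        (𝓝 ((Real.sqrt (2 * π))⁻¹ * ∫ u in Iic (1:ℝ), Real.exp (-u ^ 2 / 2))) :=
      H1.comp hmono.tendsto_atTop
    have hBj : Tendsto (fun j : ℕ => 1 - 2/((PCLT.cs φ j + j + 1 : ℕ):ℝ)) atTop (𝓝 1) := by
      have hup : Tendsto (fun j : ℕ => ((PCLT.cs φ j + j + 1 : ℕ) : ℝ)) atTop atTop := by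
        apply tendsto_atTop_mono (fun j => ?_) tendsto_natCast_atTop_atTop
        exact Nat.cast_le.2 (by omega)
      have hzero : Tendsto (fun j : ℕ => 2/((PCLT.cs φ j + j + 1 : ℕ):ℝ)) atTop (𝓝 0) :=
        Tendsto.div_atTop tendsto_const_nhds hup
      have hsub := (tendsto_const_nhds (x := (1:ℝ)) (f := atTop (α := ℕ))).sub hzero
      simpa using hsub
    have hle1 : ∀ j : ℕ, 1 - 2/((PCLT.cs φ j + j + 1 : ℕ):ℝ) ≤ (F ∘ c) j := by
      intro j
      have := PCLT.checkpoint φ j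
      simpa [hF, hc, Function.comp] using this
    have hle2 : ∀ j : ℕ, (F ∘ c) j ≤ 1 := by
      intro j
      simp only [hF, hc, Function.comp]
      exact PCLT.vol_toReal_le_one (α := True) _
    have hlim : Tendsto (F ∘ c) atTop (𝓝 1) :=
      tendsto_of_tendsto_of_tendsto_of_le_of_le hBj tendsto_const_nhds hle1 hle2
    have heq : ((Real.sqrt (2 * π))⁻¹ * ∫ u in Iic (1:ℝ), Real.exp (-u ^ 2 / 2)) = 1 :=
      tendsto_nhds_unique hFc hlim
    have hlt := PCLT.gauss_lt_one
    rw [heq] at hlt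
    exact lt_irrefl _ hlt
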